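/- Let s ∈ P and v = (1/η)Aᵀ(w_t − w₀) + b − (T_{w₀}ρ(w_t))·𝟙 ∈ ℝ^{|Y|}, with λ_t = 0, w_t − w₀ = −η∇ρ(w₀), ρ(w₀) ≥ 0, and As ≠ Aα_t. If sᵀv > 0 then the optimal Frank-Wolfe step-size γ_t = [(w_t − w₀ − w_s)ᵀ(w_t − w₀) + η sᵀb]/‖w_t − w₀ − w_s‖² is strictly positive, where w_s = −As. -/
import Mathlib


open RealInnerProductSpace

/-- Sufficient condition for a dual ascent direction: if `sᵀv > 0`, where
`v = (1/η)Aᵀ(w_t − w₀) + b − T_{w₀}ρ(w_t)·𝟙`, then the optimal Frank-Wolfe step-size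
`γ_t = [(w_t − w₀ − w_s)ᵀ(w_t − w₀) + η sᵀb]/‖w_t − w₀ − w_s‖²` is strictly positive. -/
theorem stmt_12 {p : ℕ} {Y : Type*} [Fintype Y]
    (c : Y → EuclideanSpace ℝ (Fin p)) (b : Y → ℝ) (η : ℝ) (hη : 0 < η)
    (ρ : EuclideanSpace ℝ (Fin p) → ℝ) (w₀ wt ws : EuclideanSpace ℝ (Fin p))
    (hρdiff : DifferentiableAt ℝ ρ w₀) (hρ0 : 0 ≤ ρ w₀)
    (s αt : Y → ℝ)
    (hs : (∀ yb, 0 ≤ s yb) ∧ ∑ yb, s yb = 1)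
    (hwt : wt - w₀ = -(η • gradient ρ w₀))
    (hwα : wt - w₀ = -(∑ yb, αt yb • c yb))
    (hws : ws = -(∑ yb, s yb • c yb))
    (hAs : (∑ yb, s yb • c yb) ≠ (∑ yb, αt yb • c yb))
    (v : Y → ℝ)
    (hv : ∀ yb, v yb = (1 / η) * ⟪c yb, wt - w₀⟫ + b yb
        - (ρ w₀ + ⟪gradient ρ w₀, wt - w₀⟫))
    (hsv : 0 < ∑ yb, s yb * v yb) :
    0 < (⟪wt - w₀ - ws, wt - w₀⟫ + η * ∑ yb, s yb * b yb) / ‖wt - w₀ - ws‖ ^ 2 := by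
  obtain ⟨hs0, hs1⟩ := hs
  set d := wt - w₀ with hd
  set S := ∑ yb, s yb • c yb with hS
  have hne : d - ws ≠ 0 := by
    rw [hwα, hws, neg_sub_neg]
    exact sub_ne_zero.mpr hAs
  have hden : 0 < ‖d - ws‖ ^ 2 := pow_pos (norm_pos_iff.mpr hne) 2
  apply div_pos _ hden
  -- sum expansion
  have hsum : ∑ yb, s yb * v yb
      = (1/η) * ⟪S, d⟫ + ∑ yb, s yb * b yb - (ρ w₀ + ⟪gradient ρ w₀, d⟫) := by
    have h1 : ∀ yb, s yb * v yb = (1/η) * (s yb * ⟪c yb, d⟫) + s yb * b yb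
        - s yb * (ρ w₀ + ⟪gradient ρ w₀, d⟫) := fun yb => by rw [hv]; ring
    have h2 : ⟪S, d⟫ = ∑ i, s i * ⟪c i, d⟫ := by
      rw [hS, sum_inner]; simp_rw [real_inner_smul_left]
    simp_rw [h1]
    rw [Finset.sum_sub_distrib, Finset.sum_add_distrib, ← Finset.mul_sum,
      ← Finset.sum_mul, hs1, one_mul, h2]
  have hgd : η * ⟪gradient ρ w₀, d⟫ = -⟪d, d⟫ := by
    have : ⟪d, d⟫ = ⟪-(η • gradient ρ w₀), d⟫ := by rw [← hwt]
    rw [inner_neg_left, real_inner_smul_left] at this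
    linarith
  have hws' : ⟪d - ws, d⟫ = ⟪d, d⟫ + ⟪S, d⟫ := by
    rw [hws, sub_neg_eq_add, inner_add_left]
  rw [hws']
  have hη' : η ≠ 0 := ne_of_gt hη
  set I1 : ℝ := ⟪d, d⟫
  set I2 : ℝ := ⟪S, d⟫
  set I3 : ℝ := ⟪gradient ρ w₀, d⟫
  set B : ℝ := ∑ yb, s yb * b yb
  set V : ℝ := ∑ yb, s yb * v yb
  have key : I1 + I2 + η * B = η * V + η * ρ w₀ := by
    rw [hsum]; field_simp; nlinarith [hgd]
  nlinarith [mul_pos hη hsv, mul_nonneg (le_of_lt hη) hρ0]
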